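/- The composition of two acyclic homomorphisms need not fail: if ψ : D* → D is an acyclic homomorphism and f : D → C is an acyclic homomorphism, then f ∘ ψ : D* → C is an acyclic homomorphism. -/
import Mathlib


/-- An acyclic homomorphism from the digraph `(α, rD)` to the digraph `(β, rC)`. -/
def AcyHom {α β : Type*} (rD : α → α → Prop) (rC : β → β → Prop) (ρ : α → β) : Prop :=
  (∀ u v, rD u v → ρ u = ρ v ∨ rC (ρ u) (ρ v)) ∧
  ∀ x : β, ¬ ∃ y, Relation.TransGen (fun u v => ρ u = x ∧ ρ v = x ∧ rD u v) y y

/-- The composition of two acyclic homomorphisms is an acyclic homomorphism. -/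
theorem acyHom_comp {α β γ : Type*} [Fintype α] [Fintype β] [Fintype γ]
    (rDs : α → α → Prop) (rD : β → β → Prop) (rC : γ → γ → Prop)
    (ψ : α → β) (f : β → γ)
    (hψ : AcyHom rDs rD ψ) (hf : AcyHom rD rC f) :
    AcyHom rDs rC (f ∘ ψ) := by
  constructor
  · intro u v h
    rcases hψ.1 u v h with he | hr
    · exact Or.inl (congrArg f he)
    · rcases hf.1 _ _ hr with he | hr'
      · exact Or.inl he
      · exact Or.inr hr'
  · rintro x ⟨y, hy⟩
    set S : α → α → Prop := fun u v => f (ψ u) = x ∧ f (ψ v) = x ∧ rDs u v with hS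
    set R : β → β → Prop := fun a b => f a = x ∧ f b = x ∧ rD a b with hR
    have key : ∀ u v, Relation.TransGen S u v →
        (ψ u = ψ v ∧ Relation.TransGen
            (fun p q => ψ p = ψ v ∧ ψ q = ψ v ∧ rDs p q) u v) ∨
        Relation.TransGen R (ψ u) (ψ v) := by
      intro u v h
      induction h with
      | single hs =>
        rcases hψ.1 _ _ hs.2.2 with he | hr
        · exact Or.inl ⟨he, Relation.TransGen.single ⟨he, rfl, hs.2.2⟩⟩
        · exact Or.inr (Relation.TransGen.single ⟨hs.1, hs.2.1, hr⟩)
      | tail hab hbc ih =>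
        rename_i b c
        rcases hψ.1 _ _ hbc.2.2 with he | hr
        · rcases ih with ⟨hu, ht⟩ | ht
          · refine Or.inl ⟨hu.trans he, ?_⟩
            have ht' : Relation.TransGen
                (fun p q => ψ p = ψ c ∧ ψ q = ψ c ∧ rDs p q) u b := by
              rw [← he]; exact ht
            exact ht'.tail ⟨he, rfl, hbc.2.2⟩
          · exact Or.inr (he ▸ ht)
        · rcases ih with ⟨hu, _⟩ | ht
          · refine Or.inr (Relation.TransGen.single ?_)
            rw [hu]; exact ⟨hbc.1, hbc.2.1, hr⟩
          · exact Or.inr (ht.tail ⟨hbc.1, hbc.2.1, hr⟩)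
    rcases key y y hy with ⟨_, ht⟩ | ht
    · exact hψ.2 (ψ y) ⟨y, ht⟩
    · exact hf.2 x ⟨ψ y, ht⟩
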